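/- Consider the unconstrained minimum-cost inverse optimization problem with multiple cost functions c^1, …, c^k under the weighted ℓ∞-norm objective. Then the minimum of ‖p‖_{∞,w} over all feasible deviation vectors p is attained and equals max{ 0, max{ (c^j(F*) − c^j(F)) / ( (1/w)(F* △ F) ) : j ∈ [k], F ∈ 𝓕, F ≠ F* } }, where the inner maximum over an empty index set is taken to be −∞. -/

import Mathlib

open Finset

noncomputable section

variable {S : Type*}

/-- A deviation vector `p` is feasible: it respects the bounds `l ≤ p ≤ u`
(interpreted in the extended reals) and makes `Fstar` a minimum-cost member
of `𝓕` with respect to `c - p`. -/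
def IsFeasibleDev (𝓕 : Finset (Finset S)) (Fstar : Finset S)
    (c : S → ℝ) (l u : S → EReal) (p : S → ℝ) : Prop :=
  (∀ s, l s ≤ (p s : EReal) ∧ (p s : EReal) ≤ u s) ∧
  ∀ F ∈ 𝓕, ∑ s ∈ Fstar, (c s - p s) ≤ ∑ s ∈ F, (c s - p s)

/-- The weighted ℓ∞-norm `‖p‖_{∞,w} = max_{s ∈ S} w(s)·|p(s)|`. -/
def normI [Fintype S] [Nonempty S] (w p : S → ℝ) : ℝ :=
  (univ : Finset S).sup' univ_nonempty fun s => w s * |p s|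

/-- The special deviation vector `p^δ` of the weighted ℓ∞-norm setting:
`δ/w(s)` clamped to `[ℓ(s), u(s)]` on `F*`, and `-δ/w(s)` clamped to
`[ℓ(s), u(s)]` outside of `F*`. -/
def pI [DecidableEq S] (Fstar : Finset S) (l u : S → EReal) (w : S → ℝ) (δ : ℝ) (s : S) : ℝ :=
  if s ∈ Fstar then
    if ((δ / w s : ℝ) : EReal) < l s then (l s).toReal
    else if u s < ((δ / w s : ℝ) : EReal) then (u s).toReal
    else δ / w s
  else
    if ((-(δ / w s) : ℝ) : EReal) < l s then (l s).toReal
    else if u s < ((-(δ / w s) : ℝ) : EReal) then (u s).toReal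
    else -(δ / w s)

/-- The min-max bound: `max{0, max{(cʲ(F*) − cʲ(F)) / (1/w)(F* △ F) : j, F ∈ 𝓕, F ≠ F*}}`. -/
def minmaxBound [DecidableEq S] {J : Type*} [Fintype J]
    (𝓕 : Finset (Finset S)) (Fstar : Finset S) (c : J → S → ℝ) (w : S → ℝ) : ℝ :=
  max 0 (WithBot.unbotD 0 (((univ : Finset J) ×ˢ (𝓕.erase Fstar)).image fun jF =>
    ((∑ s ∈ Fstar, c jF.1 s) - (∑ s ∈ jF.2, c jF.1 s)) /
      (∑ s ∈ (Fstar \ jF.2) ∪ (jF.2 \ Fstar), (w s)⁻¹)).max)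

lemma sum_sub_sum_eq_sdiff [DecidableEq S] (s t : Finset S) (f : S → ℝ) :
    ∑ x ∈ s, f x - ∑ x ∈ t, f x = ∑ x ∈ s \ t, f x - ∑ x ∈ t \ s, f x := by
  have h1 : ∑ x ∈ s, f x = ∑ x ∈ s \ t, f x + ∑ x ∈ s ∩ t, f x := by
    rw [← Finset.sum_union (Finset.disjoint_sdiff_inter s t), Finset.sdiff_union_inter]
  have h2 : ∑ x ∈ t, f x = ∑ x ∈ t \ s, f x + ∑ x ∈ s ∩ t, f x := by
    rw [← Finset.sum_union, Finset.inter_comm, Finset.sdiff_union_inter]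
    exact Finset.disjoint_sdiff_inter t s |>.mono_right (by rw [Finset.inter_comm])
  rw [h1, h2]; ring

lemma le_normI [Fintype S] [Nonempty S] (w q : S → ℝ) (s : S) :
    w s * |q s| ≤ normI w q :=
  Finset.le_sup' (fun s => w s * |q s|) (Finset.mem_univ s)

lemma unbot'_max_le {t : Finset ℝ} {N : ℝ} (hN : 0 ≤ N) (h : ∀ a ∈ t, a ≤ N) :
    WithBot.unbotD 0 t.max ≤ N := by
  rcases t.eq_empty_or_nonempty with rfl | ht
  · simpa using hN
  · rw [← Finset.coe_max' ht, WithBot.unbotD_coe]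
    exact Finset.max'_le _ _ _ h

theorem linf_minmax [Fintype S] [DecidableEq S] [Nonempty S]
    {J : Type*} [Fintype J] [Nonempty J]
    (𝓕 : Finset (Finset S)) (Fstar : Finset S) (c : J → S → ℝ) (w : S → ℝ)
    (hw : ∀ s, 0 < w s) (h𝓕 : 𝓕.Nonempty) (hF : Fstar ∈ 𝓕) :
    ∃ p : S → ℝ,
      (∀ j, ∀ F ∈ 𝓕, ∑ s ∈ Fstar, (c j s - p s) ≤ ∑ s ∈ F, (c j s - p s)) ∧
      normI w p = minmaxBound 𝓕 Fstar c w ∧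
      ∀ q : S → ℝ,
        (∀ j, ∀ F ∈ 𝓕, ∑ s ∈ Fstar, (c j s - q s) ≤ ∑ s ∈ F, (c j s - q s)) →
        minmaxBound 𝓕 Fstar c w ≤ normI w q := by
  classical
  set δ := minmaxBound 𝓕 Fstar c w with hδdef
  have hδ0 : 0 ≤ δ := le_max_left _ _
  -- positivity of the denominator
  have hD : ∀ F : Finset S, F ≠ Fstar →
      0 < ∑ s ∈ (Fstar \ F) ∪ (F \ Fstar), (w s)⁻¹ := by
    intro F hne
    apply Finset.sum_pos (fun s _ => inv_pos.2 (hw s))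
    rw [Finset.nonempty_iff_ne_empty]
    intro h
    rcases Finset.union_eq_empty.1 h with ⟨h1, h2⟩
    exact hne (le_antisymm (Finset.sdiff_eq_empty_iff_subset.1 h2)
      (Finset.sdiff_eq_empty_iff_subset.1 h1))
  -- the ratio bound
  have hratio : ∀ j : J, ∀ F ∈ 𝓕, F ≠ Fstar →
      ((∑ s ∈ Fstar, c j s) - (∑ s ∈ F, c j s)) /
        (∑ s ∈ (Fstar \ F) ∪ (F \ Fstar), (w s)⁻¹) ≤ δ := by
    intro j F hF' hne
    have hmem : ((j, F) : J × Finset S) ∈ (univ : Finset J) ×ˢ (𝓕.erase Fstar) := by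
      simp [Finset.mem_product, Finset.mem_erase, hne, hF']
    have himg := Finset.mem_image_of_mem (fun jF : J × Finset S =>
      ((∑ s ∈ Fstar, c jF.1 s) - (∑ s ∈ jF.2, c jF.1 s)) /
        (∑ s ∈ (Fstar \ jF.2) ∪ (jF.2 \ Fstar), (w s)⁻¹)) hmem
    have hne' : ((((univ : Finset J) ×ˢ (𝓕.erase Fstar)).image fun jF =>
        ((∑ s ∈ Fstar, c jF.1 s) - (∑ s ∈ jF.2, c jF.1 s)) /
          (∑ s ∈ (Fstar \ jF.2) ∪ (jF.2 \ Fstar), (w s)⁻¹))).Nonempty :=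
      ⟨_, himg⟩
    refine le_trans (Finset.le_max' _ _ himg) ?_
    rw [hδdef, minmaxBound, ← Finset.coe_max' hne', WithBot.unbotD_coe]
    exact le_max_right _ _
  -- the candidate deviation vector
  set p : S → ℝ := fun s => if s ∈ Fstar then δ / w s else -(δ / w s) with hp
  -- sum of p over a symmetric difference
  have hpsum : ∀ F : Finset S,
      ∑ s ∈ Fstar, p s - ∑ s ∈ F, p s
        = δ * ∑ s ∈ (Fstar \ F) ∪ (F \ Fstar), (w s)⁻¹ := by
    intro F
    rw [sum_sub_sum_eq_sdiff, Finset.sum_union disjoint_sdiff_sdiff]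
    have e1 : ∑ s ∈ Fstar \ F, p s = ∑ s ∈ Fstar \ F, δ * (w s)⁻¹ := by
      apply Finset.sum_congr rfl
      intro s hs
      rw [hp]
      simp only [(Finset.mem_sdiff.1 hs).1, if_true]
      rw [div_eq_mul_inv]
    have e2 : ∑ s ∈ F \ Fstar, p s = ∑ s ∈ F \ Fstar, -(δ * (w s)⁻¹) := by
      apply Finset.sum_congr rfl
      intro s hs
      rw [hp]
      simp only [(Finset.mem_sdiff.1 hs).2, if_false]
      rw [div_eq_mul_inv]
    rw [e1, e2, Finset.sum_neg_distrib, ← Finset.mul_sum, ← Finset.mul_sum]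
    ring
  refine ⟨p, ?_, ?_, ?_⟩
  · -- feasibility
    intro j F hF'
    rcases eq_or_ne F Fstar with rfl | hne
    · exact le_refl _
    · have key : ∑ s ∈ Fstar, c j s - ∑ s ∈ F, c j s ≤ ∑ s ∈ Fstar, p s - ∑ s ∈ F, p s := by
        rw [hpsum F]
        have := hratio j F hF' hne
        rwa [div_le_iff₀ (hD F hne)] at this
      rw [Finset.sum_sub_distrib, Finset.sum_sub_distrib]
      linarith
  · -- norm computation
    rw [normI]
    have : ∀ s : S, w s * |p s| = δ := by
      intro s
      have hwp : 0 ≤ δ / w s := div_nonneg hδ0 (hw s).le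
      rw [hp]
      by_cases hs : s ∈ Fstar <;>
        simp only [hs, if_true, if_false, abs_neg] <;>
        rw [abs_of_nonneg hwp, mul_comm, div_mul_cancel₀ δ (hw s).ne']
    simp only [this, Finset.sup'_const]
  · -- lower bound
    intro q hq
    have hN0 : 0 ≤ normI w q := by
      obtain ⟨s⟩ := (inferInstance : Nonempty S)
      exact le_trans (mul_nonneg (hw s).le (abs_nonneg _)) (le_normI w q s)
    rw [hδdef, minmaxBound, max_le_iff]
    refine ⟨hN0, unbot'_max_le hN0 ?_⟩
    intro a ha
    obtain ⟨⟨j, F⟩, hmem, rfl⟩ := Finset.mem_image.1 ha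
    obtain ⟨-, hFe⟩ := Finset.mem_product.1 hmem
    have hne : F ≠ Fstar := (Finset.mem_erase.1 hFe).1
    have hF' : F ∈ 𝓕 := (Finset.mem_erase.1 hFe).2
    rw [div_le_iff₀ (hD F hne)]
    have h1 : ∑ s ∈ Fstar, c j s - ∑ s ∈ F, c j s ≤ ∑ s ∈ Fstar, q s - ∑ s ∈ F, q s := by
      have := hq j F hF'
      rw [Finset.sum_sub_distrib, Finset.sum_sub_distrib] at this
      linarith
    have h2 : ∑ s ∈ Fstar, q s - ∑ s ∈ F, q s
        ≤ ∑ s ∈ (Fstar \ F) ∪ (F \ Fstar), |q s| := by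
      rw [sum_sub_sum_eq_sdiff, Finset.sum_union disjoint_sdiff_sdiff]
      have := Finset.sum_le_sum (fun s (_ : s ∈ Fstar \ F) => le_abs_self (q s))
      have h2' := Finset.sum_le_sum (fun s (_ : s ∈ F \ Fstar) => neg_le_abs (q s))
      calc ∑ s ∈ Fstar \ F, q s - ∑ s ∈ F \ Fstar, q s
          = ∑ s ∈ Fstar \ F, q s + ∑ s ∈ F \ Fstar, -q s := by
            rw [Finset.sum_neg_distrib]; ring
        _ ≤ ∑ s ∈ Fstar \ F, |q s| + ∑ s ∈ F \ Fstar, |q s| := add_le_add this h2'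
    have h3 : ∑ s ∈ (Fstar \ F) ∪ (F \ Fstar), |q s|
        ≤ normI w q * ∑ s ∈ (Fstar \ F) ∪ (F \ Fstar), (w s)⁻¹ := by
      rw [Finset.mul_sum]
      apply Finset.sum_le_sum
      intro s _
      have hb : w s * |q s| ≤ normI w q := le_normI w q s
      rw [← div_eq_mul_inv, le_div_iff₀ (hw s), mul_comm]
      exact hb
    exact le_trans h1 (le_trans h2 h3)
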